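/- Let ρ > 2 be a real number and M an integer. Let Φ_{M,ρ} be the set of all α ∈ O_∞ for which there exists a sequence f_n, g_n ∈ F_q[t] with g_n ≠ 0 such that f_n/g_n → α in K_∞ and |α − f_n/g_n| < q^{−M}/|g_n|^ρ for all n. Then Φ_{M,ρ} is μ-null for every Haar measure μ on K_∞ = F_q((1/t)). (This is the case A = F_q[t] of Theorem 1.2 of the paper, showing the exponent 2 in the approximation condition is optimal.) -/

import Mathlib

open FunctionField Filter Polynomial MeasureTheory
open scoped Multiplicative

variable (Fq : Type) [Field Fq] [Fintype Fq] [DecidableEq (RatFunc Fq)]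

/-- The real absolute value attached to a `WithZero (Multiplicative ℤ)`-valued valuation with base `q`:
`Multiplicative.ofAdd n ↦ q ^ n` and `0 ↦ 0`. -/
noncomputable def zabs (q : ℕ) (x : WithZero (Multiplicative ℤ)) : ℝ :=
  if hx : x = 0 then 0 else (q : ℝ) ^ Multiplicative.toAdd (WithZero.unzero hx)

/-- The absolute value `|h| = q ^ (-ν_∞ h)` on `K_∞ = F_q((1/t))`. -/
noncomputable def absInfty (q : ℕ) (h : RatFunc.CompletionAtInfty Fq) : ℝ :=
  zabs q (Valued.v h)

/-- The embedding of the polynomial ring `F_q[t]` into `K_∞ = F_q((1/t))`. -/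
noncomputable def polyToInfty (p : Polynomial Fq) : RatFunc.CompletionAtInfty Fq :=
  letI := RatFunc.inftyValued Fq
  UniformSpace.Completion.coe' (α := RatFunc Fq) (algebraMap (Polynomial Fq) (RatFunc Fq) p)

/-- The valuation ring `O_∞ = {α ∈ K_∞ : |α| ≤ 1}`. -/
def Oinfty (q : ℕ) : Set (RatFunc.CompletionAtInfty Fq) := {α | absInfty Fq q α ≤ 1}

noncomputable instance : MeasurableSpace (RatFunc.CompletionAtInfty Fq) := borel _

instance : BorelSpace (RatFunc.CompletionAtInfty Fq) := ⟨rfl⟩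

/-- A Haar measure on `K_∞`: a Borel measure invariant under all additive translations,
positive and finite on `O_∞`. -/
def IsHaar (q : ℕ) (μ : Measure (RatFunc.CompletionAtInfty Fq)) : Prop :=
  (∀ x : RatFunc.CompletionAtInfty Fq, μ.map (fun y => y + x) = μ) ∧
    0 < μ (Oinfty Fq q) ∧ μ (Oinfty Fq q) < ⊤

open scoped ENNReal
set_option linter.unusedSectionVars false
set_option maxHeartbeats 1000000

section NMaux
variable (q : ℕ) (μ : Measure (RatFunc.CompletionAtInfty Fq))

/-- integer valuation coerced into `WithZero (Multiplicative ℤ)`. -/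
def NMoz (n : ℤ) : WithZero (Multiplicative ℤ) := ((Multiplicative.ofAdd n : Multiplicative ℤ) : WithZero (Multiplicative ℤ))

lemma NMoz_ne_zero (n : ℤ) : NMoz n ≠ 0 := WithZero.coe_ne_zero

lemma NMoz_lt_NMoz {a b : ℤ} : NMoz a < NMoz b ↔ a < b := by
  rw [NMoz, NMoz, WithZero.coe_lt_coe]; exact Multiplicative.ofAdd_lt

lemma NMoz_le_NMoz {a b : ℤ} : NMoz a ≤ NMoz b ↔ a ≤ b := by
  rw [NMoz, NMoz, WithZero.coe_le_coe]; exact Multiplicative.ofAdd_le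

lemma NMoz_zero : NMoz 0 = 1 := rfl

lemma NMoz_mul (a b : ℤ) : NMoz (a + b) = NMoz a * NMoz b := by
  rw [NMoz, NMoz, NMoz, ← WithZero.coe_mul, ← ofAdd_add]

lemma NMoz_div (a b : ℤ) : NMoz (a - b) = NMoz a / NMoz b := by
  rw [NMoz, NMoz, NMoz, ← WithZero.coe_div, ← ofAdd_sub]

/-- coercion RatFunc → FqtInfty as a ring hom -/
noncomputable def ratToInfty : RatFunc Fq →+* RatFunc.CompletionAtInfty Fq :=
  letI := RatFunc.inftyValued Fq
  UniformSpace.Completion.coeRingHom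

lemma v_ratToInfty (r : RatFunc Fq) :
    Valued.v (ratToInfty Fq r) = (RatFunc.inftyValued Fq).v r := by
  letI := RatFunc.inftyValued Fq
  exact Valued.valuedCompletion_apply r

lemma polyToInfty_eq (p : Polynomial Fq) :
    polyToInfty Fq p = ratToInfty Fq (algebraMap (Polynomial Fq) (RatFunc Fq) p) := rfl

lemma v_polyToInfty {p : Polynomial Fq} (hp : p ≠ 0) :
    Valued.v (polyToInfty Fq p) = NMoz (p.natDegree : ℤ) := by
  rw [polyToInfty_eq, v_ratToInfty, RatFunc.inftyValued.def, RatFunc.inftyValuation.polynomial Fq hp]; rfl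

lemma zabs_NMoz (q : ℕ) (n : ℤ) : zabs q (NMoz n) = (q : ℝ) ^ n := by
  rw [NMoz, zabs, dif_neg (WithZero.coe_ne_zero)]
  congr 1

lemma v_eq_zero_iff (x : RatFunc.CompletionAtInfty Fq) : Valued.v x = 0 ↔ x = 0 := Valuation.zero_iff _

/-- For nonzero x, the valuation is `NMoz n` and the absolute value `q ^ n`. -/
lemma exists_v_eq (q : ℕ) {x : RatFunc.CompletionAtInfty Fq} (hx : x ≠ 0) :
    ∃ n : ℤ, Valued.v x = NMoz n ∧ absInfty Fq q x = (q : ℝ) ^ n := by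
  have h0 : Valued.v x ≠ 0 := fun h => hx ((v_eq_zero_iff Fq x).1 h)
  refine ⟨Multiplicative.toAdd (WithZero.unzero h0), ?_, ?_⟩
  · rw [NMoz, ofAdd_toAdd, WithZero.coe_unzero]
  · rw [absInfty, zabs, dif_neg h0]

lemma two_le_q (q : ℕ) (hq : Fintype.card Fq = q) : 2 ≤ q := hq ▸ Fintype.one_lt_card

lemma absInfty_le_one_iff (q : ℕ) (hq : Fintype.card Fq = q) (x : RatFunc.CompletionAtInfty Fq) :
    absInfty Fq q x ≤ 1 ↔ Valued.v x ≤ 1 := by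
  have hq1 : (1:ℝ) < q := by exact_mod_cast two_le_q Fq q hq
  rcases eq_or_ne x 0 with rfl | hx
  · simp [absInfty, zabs, (v_eq_zero_iff Fq (0: RatFunc.CompletionAtInfty Fq)).2 rfl, zero_le_one]
  · obtain ⟨n, hv, ha⟩ := exists_v_eq Fq q hx
    rw [ha, hv, ← NMoz_zero, NMoz_le_NMoz]
    rw [show (1:ℝ) = (q:ℝ) ^ (0:ℤ) by simp]
    exact zpow_le_zpow_iff_right₀ hq1

lemma v_lt_of_absInfty_lt (q : ℕ) (hq : Fintype.card Fq = q) {x : RatFunc.CompletionAtInfty Fq} {c : ℝ}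
    (hc : 0 ≤ c) (h : absInfty Fq q x < (q : ℝ) ^ (-c)) :
    Valued.v x < NMoz (-(⌊c⌋.toNat : ℤ)) := by
  have hq1 : (1:ℝ) < q := by exact_mod_cast two_le_q Fq q hq
  rcases eq_or_ne x 0 with rfl | hx
  · rw [(v_eq_zero_iff Fq (0 : RatFunc.CompletionAtInfty Fq)).2 rfl, NMoz]
    exact WithZero.zero_lt_coe _
  · obtain ⟨n, hv, ha⟩ := exists_v_eq Fq q hx
    rw [hv, NMoz_lt_NMoz]
    rw [ha, ← Real.rpow_intCast (q:ℝ) n, Real.rpow_lt_rpow_left_iff hq1] at h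
    rw [Int.toNat_of_nonneg (Int.floor_nonneg.2 hc)]
    have : c < ((-n : ℤ) : ℝ) := by push_cast; linarith
    have := Int.floor_lt.2 this
    omega

lemma v_poly_div {f g : Polynomial Fq} (hf : f ≠ 0) (hg : g ≠ 0) :
    Valued.v (polyToInfty Fq f / polyToInfty Fq g)
      = NMoz ((f.natDegree : ℤ) - g.natDegree) := by
  rw [polyToInfty_eq, polyToInfty_eq, ← map_div₀ (ratToInfty Fq), v_ratToInfty,
    Valuation.map_div, RatFunc.inftyValued.def, RatFunc.inftyValued.def,
    RatFunc.inftyValuation.polynomial Fq hf, RatFunc.inftyValuation.polynomial Fq hg, NMoz_div]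
  rfl

lemma isOpen_vball (c : RatFunc.CompletionAtInfty Fq) (γ : WithZero (Multiplicative ℤ)) (hγ : γ ≠ 0) :
    IsOpen {x : RatFunc.CompletionAtInfty Fq | Valued.v (x - c) < γ} := by
  letI := WithZeroTopology.topologicalSpace (Γ₀ := WithZero (Multiplicative ℤ))
  have hsurj : Function.Surjective
      (Valued.v : RatFunc.CompletionAtInfty Fq → WithZero (Multiplicative ℤ)) := by
    intro δ
    rcases eq_or_ne δ 0 with rfl | hδ0
    · exact ⟨0, map_zero _⟩
    · refine ⟨ratToInfty Fq (RatFunc.X ^ (WithZero.log δ)), ?_⟩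
      rw [v_ratToInfty, RatFunc.inftyValued.def, ← RatFunc.inftyValuation_apply,
        RatFunc.inftyValuation.X_zpow, WithZero.exp_log hδ0]
  have hcont : Continuous
      (Valued.v : RatFunc.CompletionAtInfty Fq → WithZero (Multiplicative ℤ)) :=
    Valued.continuous_valuation_of_surjective hsurj
  exact (WithZeroTopology.isOpen_Iio (a := γ)).preimage (hcont.comp (continuous_sub_right c))

lemma measure_preimage_add (hμ : IsHaar Fq q μ) (c : RatFunc.CompletionAtInfty Fq) {s : Set (RatFunc.CompletionAtInfty Fq)}
    (hs : MeasurableSet s) : μ ((fun y => y + c) ⁻¹' s) = μ s := by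
  conv_rhs => rw [← hμ.1 c]
  rw [Measure.map_apply (by fun_prop) hs]

lemma measure_vball_translate (hμ : IsHaar Fq q μ) (c : RatFunc.CompletionAtInfty Fq) {γ : WithZero (Multiplicative ℤ)} (hγ : γ ≠ 0) :
    μ {x : RatFunc.CompletionAtInfty Fq | Valued.v (x - c) < γ} = μ {x : RatFunc.CompletionAtInfty Fq | Valued.v x < γ} := by
  have hms : MeasurableSet {x : RatFunc.CompletionAtInfty Fq | Valued.v x < γ} := by
    have := isOpen_vball Fq 0 γ hγ
    simpa using this.measurableSet
  rw [← measure_preimage_add Fq q μ hμ (-c) hms]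
  congr 1
  ext y
  simp [sub_eq_add_neg]

noncomputable instance degLTFintype (m : ℕ) : Fintype (degreeLT Fq m) :=
  Fintype.ofEquiv _ (degreeLTEquiv Fq m).toEquiv.symm

lemma degLT_card (q : ℕ) (hq : Fintype.card Fq = q) (m : ℕ) :
    Fintype.card (degreeLT Fq m) = q ^ m := by
  rw [Fintype.card_congr (degreeLTEquiv Fq m).toEquiv]
  simp [Fintype.card_fun, hq]

lemma v_polyRat {p : Polynomial Fq} (hp : p ≠ 0) :
    (RatFunc.inftyValued Fq).v (algebraMap (Polynomial Fq) (RatFunc Fq) p)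
      = NMoz (p.natDegree : ℤ) := by
  rw [RatFunc.inftyValued.def, RatFunc.inftyValuation.polynomial Fq hp]; rfl

/-- representative of a residue class -/
noncomputable def NMrep (m : ℕ) (P : degreeLT Fq (m+1)) : RatFunc.CompletionAtInfty Fq :=
  ratToInfty Fq (algebraMap (Polynomial Fq) (RatFunc Fq) (P : Polynomial Fq) / RatFunc.X ^ m)

lemma v_ratX_pow (m : ℕ) : (RatFunc.inftyValued Fq).v ((RatFunc.X : RatFunc Fq) ^ m) = NMoz m := by
  rw [map_pow, RatFunc.inftyValued.def, ← RatFunc.inftyValuation_apply, RatFunc.inftyValuation.X,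
    WithZero.exp_eq_coe_ofAdd]
  rw [NMoz, ← WithZero.coe_pow]
  congr 1
  rw [← ofAdd_nsmul]
  congr 1
  simp

lemma degLT_natDegree_le (m : ℕ) (P : degreeLT Fq (m+1)) : (P : Polynomial Fq).natDegree ≤ m := by
  have := Polynomial.mem_degreeLT.1 P.2
  exact Polynomial.natDegree_le_iff_degree_le.2 (Order.le_of_lt_succ (by exact_mod_cast this))

lemma v_NMrep_le (m : ℕ) (P : degreeLT Fq (m+1)) : Valued.v (NMrep Fq m P) ≤ 1 := by
  rw [NMrep, v_ratToInfty, Valuation.map_div, v_ratX_pow]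
  rcases eq_or_ne (P : Polynomial Fq) 0 with h0 | h0
  · rw [h0]; simp
  · rw [v_polyRat Fq h0]
    have : NMoz ((P : Polynomial Fq).natDegree : ℤ) ≤ NMoz m := by
      rw [NMoz_le_NMoz]; exact_mod_cast degLT_natDegree_le Fq m P
    calc NMoz ((P : Polynomial Fq).natDegree : ℤ) / NMoz m
        ≤ NMoz m / NMoz m := by
          rw [div_eq_mul_inv, div_eq_mul_inv]
          exact mul_le_mul_left this _
      _ = 1 := div_self (NMoz_ne_zero m)

lemma v_NMrep_sub (m : ℕ) (P P' : degreeLT Fq (m+1)) (hne : P ≠ P') :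
    ¬ Valued.v (NMrep Fq m P - NMrep Fq m P') < NMoz (-(m:ℤ)) := by
  have hsub : NMrep Fq m P - NMrep Fq m P'
      = ratToInfty Fq (algebraMap (Polynomial Fq) (RatFunc Fq)
          ((P : Polynomial Fq) - (P' : Polynomial Fq)) / RatFunc.X ^ m) := by
    rw [NMrep, NMrep, ← map_sub (ratToInfty Fq), div_sub_div_same, ← map_sub]
  have hP0 : (P : Polynomial Fq) - (P' : Polynomial Fq) ≠ 0 := by
    intro h
    exact hne (Subtype.ext (by linear_combination (norm := ring_nf) h))
  rw [hsub, v_ratToInfty, Valuation.map_div, v_ratX_pow, v_polyRat Fq hP0, ← NMoz_div,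
    not_lt, NMoz_le_NMoz]
  omega

lemma NMoz_neg_le_one (m : ℕ) : NMoz (-(m:ℤ)) ≤ 1 := by
  rw [← NMoz_zero, NMoz_le_NMoz]; omega

lemma measure_vball_le (hq : Fintype.card Fq = q) (hμ : IsHaar Fq q μ) (m : ℕ)
    (c : RatFunc.CompletionAtInfty Fq) :
    μ {x : RatFunc.CompletionAtInfty Fq | Valued.v (x - c) < NMoz (-(m:ℤ))}
      ≤ μ (Oinfty Fq q) / (q : ℝ≥0∞) ^ (m+1) := by
  rw [measure_vball_translate Fq q μ hμ c (NMoz_ne_zero _)]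
  set B := {x : RatFunc.CompletionAtInfty Fq | Valued.v x < NMoz (-(m:ℤ))} with hB
  -- the translated balls
  set T : degreeLT Fq (m+1) → Set (RatFunc.CompletionAtInfty Fq) :=
    fun P => {x : RatFunc.CompletionAtInfty Fq | Valued.v (x - NMrep Fq m P) < NMoz (-(m:ℤ))} with hT
  have hTmeas : ∀ P, MeasurableSet (T P) :=
    fun P => (isOpen_vball Fq _ _ (NMoz_ne_zero _)).measurableSet
  have hTdisj : Pairwise (Function.onFun Disjoint T) := by
    intro P P' hne
    rw [Function.onFun, Set.disjoint_left]
    intro x hx hx'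
    refine v_NMrep_sub Fq m P P' hne ?_
    have : NMrep Fq m P - NMrep Fq m P' = (x - NMrep Fq m P') - (x - NMrep Fq m P) := by ring
    rw [this]
    calc Valued.v ((x - NMrep Fq m P') - (x - NMrep Fq m P))
        ≤ max (Valued.v (x - NMrep Fq m P')) (Valued.v (x - NMrep Fq m P)) :=
          Valuation.map_sub _ _ _
      _ < NMoz (-(m:ℤ)) := max_lt hx' hx
  have hTsub : ∀ P, T P ⊆ Oinfty Fq q := by
    intro P x hx
    have : Valued.v x ≤ 1 := by
      have hxx : x = (x - NMrep Fq m P) + NMrep Fq m P := by ring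
      rw [hxx]
      calc Valued.v ((x - NMrep Fq m P) + NMrep Fq m P)
          ≤ max (Valued.v (x - NMrep Fq m P)) (Valued.v (NMrep Fq m P)) :=
            Valuation.map_add _ _ _
        _ ≤ 1 := max_le (le_trans hx.le (NMoz_neg_le_one m)) (v_NMrep_le Fq m P)
    exact (absInfty_le_one_iff Fq q hq x).2 this
  have hunion : μ (⋃ P, T P) = ∑' P, μ (T P) := measure_iUnion hTdisj hTmeas
  have hTm : ∀ P, μ (T P) = μ B := fun P =>
    measure_vball_translate Fq q μ hμ _ (NMoz_ne_zero _)
  have hcard : (Fintype.card (degreeLT Fq (m+1)) : ℝ≥0∞) = (q:ℝ≥0∞) ^ (m+1) := by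
    rw [degLT_card Fq q hq]; push_cast; ring
  have hsum : ∑' P : degreeLT Fq (m+1), μ (T P) = (q:ℝ≥0∞) ^ (m+1) * μ B := by
    rw [tsum_congr hTm, tsum_eq_sum (s := Finset.univ) (by simp), Finset.sum_const,
      nsmul_eq_mul, show (Finset.univ.card) = Fintype.card (degreeLT Fq (m+1)) from rfl, hcard]
  have hle : (q:ℝ≥0∞) ^ (m+1) * μ B ≤ μ (Oinfty Fq q) := by
    rw [← hsum, ← hunion]
    exact measure_mono (Set.iUnion_subset hTsub)
  have hq0 : (q:ℝ≥0∞) ≠ 0 := by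
    have := two_le_q Fq q hq
    have : q ≠ 0 := by omega
    exact_mod_cast this
  rw [ENNReal.le_div_iff_mul_le (Or.inl (pow_ne_zero _ hq0)) (Or.inl
    (ENNReal.pow_ne_top (ENNReal.natCast_ne_top q)))]
  rw [mul_comm]
  exact hle

instance : Countable (Polynomial Fq) := by
  haveI : Countable (ℕ →₀ Fq) := inferInstance
  have h : Function.Injective (fun p : Polynomial Fq => (p.toFinsupp.coeff : ℕ →₀ Fq)) :=
    fun p r h => by
      cases p with | ofFinsupp a => cases r with | ofFinsupp b => cases a; cases b; simp only at h; subst h; rfl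
  exact h.countable

lemma tendsto_c0_div (hq : Fintype.card Fq = q) (hμ : IsHaar Fq q μ) :
    Tendsto (fun m : ℕ => μ (Oinfty Fq q) / (q : ℝ≥0∞) ^ (m+1)) atTop (nhds 0) := by
  have hq1 : (1:ℝ≥0∞) < q := by
    have := two_le_q Fq q hq
    exact_mod_cast (by omega : 1 < q)
  have hr : (q:ℝ≥0∞)⁻¹ < 1 := ENNReal.inv_lt_one.2 hq1
  have h1 : Tendsto (fun m : ℕ => ((q:ℝ≥0∞)⁻¹) ^ m) atTop (nhds 0) :=
    ENNReal.tendsto_pow_atTop_nhds_zero_of_lt_one hr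
  have h2 : Tendsto (fun m : ℕ => ((q:ℝ≥0∞)⁻¹) ^ (m+1)) atTop (nhds 0) :=
    h1.comp (tendsto_add_atTop_nat 1)
  have h3 := ENNReal.Tendsto.const_mul (a := μ (Oinfty Fq q)) h2 (Or.inr hμ.2.2.ne)
  rw [mul_zero] at h3
  convert h3 using 2 with m
  rw [div_eq_mul_inv, ENNReal.inv_pow]

lemma measure_singleton_zero (hq : Fintype.card Fq = q) (hμ : IsHaar Fq q μ)
    (x : RatFunc.CompletionAtInfty Fq) : μ {x} = 0 := by
  have hle : ∀ m : ℕ, μ {x} ≤ μ (Oinfty Fq q) / (q : ℝ≥0∞) ^ (m+1) := by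
    intro m
    refine le_trans (measure_mono ?_) (measure_vball_le Fq q μ hq hμ m x)
    intro y hy
    rw [Set.mem_singleton_iff] at hy
    subst hy
    show Valued.v (y - y) < NMoz (-(m:ℤ))
    rw [sub_self, map_zero, NMoz]
    exact WithZero.zero_lt_coe _
  have := ge_of_tendsto' (tendsto_c0_div Fq q μ hq hμ) hle
  exact le_antisymm this (zero_le)

/-- the set of "rational points" -/
def NMrat : Set (RatFunc.CompletionAtInfty Fq) :=
  Set.range (fun p : Polynomial Fq × Polynomial Fq => polyToInfty Fq p.1 / polyToInfty Fq p.2)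

lemma measure_NMrat (hq : Fintype.card Fq = q) (hμ : IsHaar Fq q μ) : μ (NMrat Fq) = 0 := by
  have hc : (NMrat Fq).Countable := Set.countable_range _
  have : NMrat Fq = ⋃ x ∈ NMrat Fq, ({x} : Set (RatFunc.CompletionAtInfty Fq)) := by simp
  rw [this, (measure_biUnion_null_iff hc)]
  exact fun x _ => measure_singleton_zero Fq q μ hq hμ x

/-- if `α` is not rational and approximated by rationals, the denominators have
unbounded degree -/
lemma exists_deg_ge (hq : Fintype.card Fq = q) {α : RatFunc.CompletionAtInfty Fq} (hα : α ∉ NMrat Fq)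
    (hO : α ∈ Oinfty Fq q) {f g : ℕ → Polynomial Fq}
    (hconv : Tendsto (fun n => polyToInfty Fq (f n) / polyToInfty Fq (g n)) atTop (nhds α))
    (hg : ∀ n, g n ≠ 0) (D : ℕ) : ∃ n, D ≤ (g n).natDegree := by
  by_contra hcon
  push_neg at hcon
  set c : ℕ → RatFunc.CompletionAtInfty Fq := fun n => polyToInfty Fq (f n) / polyToInfty Fq (g n) with hc
  -- eventually c n is close to α, hence in O∞
  have hev : ∀ᶠ n in atTop, Valued.v (c n - α) < (1 : WithZero (Multiplicative ℤ)) := by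
    have hopen : IsOpen {x : RatFunc.CompletionAtInfty Fq | Valued.v (x - α) < (1:WithZero (Multiplicative ℤ))} :=
      isOpen_vball Fq α 1 one_ne_zero
    have hmem : α ∈ {x : RatFunc.CompletionAtInfty Fq | Valued.v (x - α) < (1:WithZero (Multiplicative ℤ))} := by
      show Valued.v (α - α) < (1:WithZero (Multiplicative ℤ))
      rw [sub_self, map_zero]
      exact zero_lt_one
    exact hconv.eventually (hopen.mem_nhds hmem)
  have hvα : Valued.v α ≤ 1 := (absInfty_le_one_iff Fq q hq α).1 hO
  have hev2 : ∀ᶠ n in atTop, c n ∈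
      (fun p : degreeLT Fq D × degreeLT Fq D =>
        polyToInfty Fq (p.1 : Polynomial Fq) / polyToInfty Fq (p.2 : Polynomial Fq)) ''
        Set.univ := by
    filter_upwards [hev] with n hn
    have hvc : Valued.v (c n) ≤ 1 := by
      have : c n = (c n - α) + α := by ring
      rw [this]
      calc Valued.v ((c n - α) + α) ≤ max (Valued.v (c n - α)) (Valued.v α) :=
            Valuation.map_add _ _ _
        _ ≤ 1 := max_le hn.le hvα
    have hfd : (f n).natDegree ≤ (g n).natDegree ∨ f n = 0 := by
      rcases eq_or_ne (f n) 0 with h0 | h0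
      · exact Or.inr h0
      · left
        rw [hc] at hvc
        rw [v_poly_div Fq h0 (hg n), ← NMoz_zero, NMoz_le_NMoz] at hvc
        omega
    have hgD : (g n).degree < (D : WithBot ℕ) := by
      have := hcon n
      exact lt_of_le_of_lt (Polynomial.degree_le_natDegree) (by exact_mod_cast this)
    have hfD : (f n).degree < (D : WithBot ℕ) := by
      rcases hfd with h | h
      · refine lt_of_le_of_lt (Polynomial.degree_le_natDegree) ?_
        have : (f n).natDegree < D := lt_of_le_of_lt h (hcon n)
        exact_mod_cast this
      · rw [h, Polynomial.degree_zero]; exact WithBot.bot_lt_coe _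
    exact ⟨(⟨f n, Polynomial.mem_degreeLT.2 hfD⟩,
      ⟨g n, Polynomial.mem_degreeLT.2 hgD⟩), Set.mem_univ _, rfl⟩
  have hfin : ((fun p : degreeLT Fq D × degreeLT Fq D =>
      polyToInfty Fq (p.1 : Polynomial Fq) / polyToInfty Fq (p.2 : Polynomial Fq)) ''
        Set.univ).Finite := Set.Finite.image _ Set.finite_univ
  have hmem := hfin.isClosed.mem_of_tendsto hconv hev2
  obtain ⟨⟨P1, P2⟩, -, hPeq⟩ := hmem
  exact hα ⟨((P1 : Polynomial Fq), (P2 : Polynomial Fq)), hPeq⟩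

lemma me_bound (M : ℤ) (ρ : ℝ) (e : ℕ) :
    (M:ℝ) + ρ * e ≤ ((⌊(M:ℝ) + ρ * e⌋.toNat : ℕ) : ℝ) + 1 := by
  have h1 : (M:ℝ) + ρ * e < (⌊(M:ℝ) + ρ * e⌋ : ℝ) + 1 := Int.lt_floor_add_one _
  have h2 : (⌊(M:ℝ) + ρ * e⌋ : ℝ) ≤ ((⌊(M:ℝ) + ρ * e⌋.toNat : ℕ) : ℝ) := by
    exact_mod_cast Int.self_le_toNat _
  linarith

lemma tsum_vb_le (hq : Fintype.card Fq = q) (hμ : IsHaar Fq q μ) (M : ℤ) (ρ : ℝ)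
    (e : ℕ) :
    (∑' i : degreeLT Fq (e+1) × degreeLT Fq (e+1),
      μ {x : RatFunc.CompletionAtInfty Fq | Valued.v (x - polyToInfty Fq (i.1 : Polynomial Fq)
          / polyToInfty Fq (i.2 : Polynomial Fq))
        < NMoz (-((⌊(M:ℝ) + ρ * e⌋.toNat : ℕ) : ℤ))})
      ≤ μ (Oinfty Fq q) * ((q:ℝ≥0∞) ^ ((2:ℝ) - M)) * ((q:ℝ≥0∞) ^ ((2:ℝ) - ρ)) ^ e := by
  set me : ℕ := ⌊(M:ℝ) + ρ * e⌋.toNat with hme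
  set c₀ := μ (Oinfty Fq q) with hc₀
  have hq2 : 2 ≤ q := two_le_q Fq q hq
  have hq0 : (q:ℝ≥0∞) ≠ 0 := by
    have : q ≠ 0 := by omega
    exact_mod_cast this
  have hqt : (q:ℝ≥0∞) ≠ ⊤ := ENNReal.natCast_ne_top q
  have hq1 : (1:ℝ≥0∞) ≤ (q:ℝ≥0∞) := by
    exact_mod_cast (by omega : 1 ≤ q)
  calc (∑' i : degreeLT Fq (e+1) × degreeLT Fq (e+1),
      μ {x : RatFunc.CompletionAtInfty Fq | Valued.v (x - polyToInfty Fq (i.1 : Polynomial Fq)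
          / polyToInfty Fq (i.2 : Polynomial Fq)) < NMoz (-(me : ℤ))})
      ≤ ∑' _i : degreeLT Fq (e+1) × degreeLT Fq (e+1), c₀ / (q:ℝ≥0∞) ^ (me + 1) := by
        refine ENNReal.tsum_le_tsum fun i => ?_
        exact measure_vball_le Fq q μ hq hμ me _
    _ = (Fintype.card (degreeLT Fq (e+1) × degreeLT Fq (e+1)) : ℝ≥0∞)
          * (c₀ / (q:ℝ≥0∞) ^ (me + 1)) := by
        rw [tsum_eq_sum (s := Finset.univ) (by simp), Finset.sum_const, nsmul_eq_mul,
          show (Finset.univ.card) = Fintype.card (degreeLT Fq (e+1) × degreeLT Fq (e+1))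
            from rfl]
    _ = (q:ℝ≥0∞) ^ (2*(e+1)) * (c₀ / (q:ℝ≥0∞) ^ (me + 1)) := by
        rw [Fintype.card_prod, degLT_card Fq q hq]
        congr 1
        push_cast
        ring
    _ = c₀ * (q:ℝ≥0∞) ^ ((2*(e+1) : ℕ) : ℝ) * ((q:ℝ≥0∞) ^ (((me + 1 : ℕ)) : ℝ))⁻¹ := by
        rw [ENNReal.rpow_natCast, ENNReal.rpow_natCast, div_eq_mul_inv]
        ring
    _ = c₀ * (q:ℝ≥0∞) ^ (((2*(e+1) : ℕ) : ℝ) - ((me + 1 : ℕ) : ℝ)) := by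
        rw [← ENNReal.rpow_neg, mul_assoc, ← ENNReal.rpow_add _ _ hq0 hqt, sub_eq_add_neg]
    _ ≤ c₀ * (q:ℝ≥0∞) ^ (((2:ℝ) - M) + ((2:ℝ) - ρ) * e) := by
        refine mul_le_mul_right (ENNReal.rpow_le_rpow_of_exponent_le hq1 ?_) _
        have := me_bound M ρ e
        push_cast
        push_cast at this
        linarith
    _ = c₀ * ((q:ℝ≥0∞) ^ ((2:ℝ) - M)) * ((q:ℝ≥0∞) ^ ((2:ℝ) - ρ)) ^ e := by
        rw [ENNReal.rpow_add _ _ hq0 hqt, ENNReal.rpow_mul, ENNReal.rpow_natCast, mul_assoc]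

lemma NMrpow_ne_top {x : ℝ≥0∞} (hx : x ≠ 0) (hxt : x ≠ ⊤) (y : ℝ) : x ^ y ≠ ⊤ := by
  rcases le_or_gt 0 y with hy | hy
  · exact ENNReal.rpow_ne_top_of_nonneg hy hxt
  · rw [← neg_neg y, ENNReal.rpow_neg]
    exact ENNReal.inv_ne_top.2 (ENNReal.rpow_pos (hx.bot_lt) hxt).ne'

/-- Theorem 1.2 for `A = F_q[t]`: for `ρ > 2` and any integer `M`, the set
`Φ_{M,ρ}` of `α ∈ O_∞` admitting a sequence `f_n/g_n → α` with
`|α - f_n/g_n| < q^(-M)/|g_n|^ρ` is null for every Haar measure. -/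
theorem null_measure_of_rho_approximable (q : ℕ) (hq : Fintype.card Fq = q)
    (M : ℤ) (ρ : ℝ) (hρ : 2 < ρ)
    (μ : Measure (RatFunc.CompletionAtInfty Fq)) (hμ : IsHaar Fq q μ) :
    μ {α : RatFunc.CompletionAtInfty Fq | α ∈ Oinfty Fq q ∧
      ∃ f g : ℕ → Polynomial Fq,
        (∀ n, g n ≠ 0 ∧
          absInfty Fq q (α - polyToInfty Fq (f n) / polyToInfty Fq (g n)) <
            (q : ℝ) ^ (-M) / absInfty Fq q (polyToInfty Fq (g n)) ^ ρ) ∧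
        Tendsto (fun n => polyToInfty Fq (f n) / polyToInfty Fq (g n)) atTop (nhds α)} = 0 := by
  have hq2 : 2 ≤ q := two_le_q Fq q hq
  have hqR : (1:ℝ) < q := by exact_mod_cast (by omega : 1 < q)
  have hqR0 : (0:ℝ) < q := by positivity
  set c₀ := μ (Oinfty Fq q) with hc₀
  set N₀ : ℕ := M.natAbs with hN₀
  set me : ℕ → ℕ := fun e => ⌊(M:ℝ) + ρ * e⌋.toNat with hmedef
  set vb : (e : ℕ) → (degreeLT Fq (e+1) × degreeLT Fq (e+1)) → Set (RatFunc.CompletionAtInfty Fq) :=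
    fun e i => {x : RatFunc.CompletionAtInfty Fq | Valued.v (x - polyToInfty Fq (i.1 : Polynomial Fq)
      / polyToInfty Fq (i.2 : Polynomial Fq)) < NMoz (-(me e : ℤ))} with hvb
  set E : ℕ → Set (RatFunc.CompletionAtInfty Fq) := fun D => ⋃ d : ℕ, ⋃ i, vb (N₀ + D + d) i with hE
  -- Step A : inclusion
  have hincl : {α : RatFunc.CompletionAtInfty Fq | α ∈ Oinfty Fq q ∧
      ∃ f g : ℕ → Polynomial Fq,
        (∀ n, g n ≠ 0 ∧
          absInfty Fq q (α - polyToInfty Fq (f n) / polyToInfty Fq (g n)) <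
            (q : ℝ) ^ (-M) / absInfty Fq q (polyToInfty Fq (g n)) ^ ρ) ∧
        Tendsto (fun n => polyToInfty Fq (f n) / polyToInfty Fq (g n)) atTop (nhds α)}
      ⊆ NMrat Fq ∪ ⋂ D, E D := by
    rintro α ⟨hO, f, g, hfg, hconv⟩
    by_cases hrat : α ∈ NMrat Fq
    · exact Or.inl hrat
    refine Or.inr (Set.mem_iInter.2 fun D => ?_)
    obtain ⟨n, hn⟩ := exists_deg_ge Fq q hq hrat hO hconv (fun n => (hfg n).1) (N₀ + D)
    set e : ℕ := (g n).natDegree with he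
    have hgn : g n ≠ 0 := (hfg n).1
    have habs := (hfg n).2
    -- rewrite the bound
    have hvg : absInfty Fq q (polyToInfty Fq (g n)) = (q:ℝ) ^ (e:ℤ) := by
      rw [absInfty, v_polyToInfty Fq hgn, zabs_NMoz]
    have hrhs : (q : ℝ) ^ (-M) / absInfty Fq q (polyToInfty Fq (g n)) ^ ρ
        = (q:ℝ) ^ (-((M:ℝ) + ρ * e)) := by
      rw [hvg, ← Real.rpow_intCast (q:ℝ) (e:ℤ), ← Real.rpow_intCast (q:ℝ) (-M),
        ← Real.rpow_mul hqR0.le, ← Real.rpow_sub hqR0]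
      congr 1
      push_cast
      ring
    rw [hrhs] at habs
    have hc : 0 ≤ (M:ℝ) + ρ * e := by
      have h1 : ((N₀:ℕ):ℝ) ≤ (e:ℝ) := by
        exact_mod_cast le_trans (Nat.le_add_right _ D) hn
      have h2 : -((N₀:ℕ):ℤ) ≤ M := by
        show -((M.natAbs:ℕ):ℤ) ≤ M
        omega
      have h2' : -((N₀:ℕ):ℝ) ≤ (M:ℝ) := by exact_mod_cast h2
      nlinarith [Nat.cast_nonneg (α := ℝ) e]
    have hv := v_lt_of_absInfty_lt Fq q hq hc habs
    -- memberships
    have hvα : Valued.v α ≤ 1 := (absInfty_le_one_iff Fq q hq α).1 hO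
    have hvc : Valued.v (polyToInfty Fq (f n) / polyToInfty Fq (g n)) ≤ 1 := by
      have hxx : polyToInfty Fq (f n) / polyToInfty Fq (g n)
          = α - (α - polyToInfty Fq (f n) / polyToInfty Fq (g n)) := by ring
      rw [hxx]
      calc Valued.v (α - (α - polyToInfty Fq (f n) / polyToInfty Fq (g n)))
          ≤ max (Valued.v α)
              (Valued.v (α - polyToInfty Fq (f n) / polyToInfty Fq (g n))) :=
            Valuation.map_sub _ _ _
        _ ≤ 1 := max_le hvα (le_trans hv.le (NMoz_neg_le_one _))
    have hfmem : f n ∈ degreeLT Fq (e+1) := by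
      rcases eq_or_ne (f n) 0 with h0 | h0
      · rw [h0]; exact Submodule.zero_mem _
      · rw [v_poly_div Fq h0 hgn, ← NMoz_zero, NMoz_le_NMoz] at hvc
        refine Polynomial.mem_degreeLT.2 (lt_of_le_of_lt Polynomial.degree_le_natDegree ?_)
        have : (f n).natDegree < e + 1 := by omega
        exact_mod_cast this
    have hgmem : g n ∈ degreeLT Fq (e+1) := by
      refine Polynomial.mem_degreeLT.2 (lt_of_le_of_lt Polynomial.degree_le_natDegree ?_)
      exact_mod_cast Nat.lt_succ_self e
    refine Set.mem_iUnion.2 ⟨e - (N₀ + D), ?_⟩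
    rw [show N₀ + D + (e - (N₀ + D)) = e by omega]
    exact Set.mem_iUnion.2 ⟨(⟨f n, hfmem⟩, ⟨g n, hgmem⟩), hv⟩
  -- Step B : the intersection is null
  set s : ℝ≥0∞ := (q:ℝ≥0∞) ^ ((2:ℝ) - ρ) with hs
  have hq0' : (q:ℝ≥0∞) ≠ 0 := by
    have : q ≠ 0 := by omega
    exact_mod_cast this
  have hqt' : (q:ℝ≥0∞) ≠ ⊤ := ENNReal.natCast_ne_top q
  have hq1' : (1:ℝ≥0∞) < (q:ℝ≥0∞) := by exact_mod_cast (by omega : 1 < q)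
  have hs1 : s < 1 := ENNReal.rpow_lt_one_of_one_lt_of_neg hq1' (by linarith)
  have hst : s ≠ ⊤ := (lt_of_lt_of_le hs1 le_top).ne
  set Cbig : ℝ≥0∞ := c₀ * (q:ℝ≥0∞) ^ ((2:ℝ) - M) * s ^ N₀ * (1 - s)⁻¹ with hCbig
  have hCt : Cbig ≠ ⊤ := by
    refine ENNReal.mul_ne_top (ENNReal.mul_ne_top (ENNReal.mul_ne_top hμ.2.2.ne
      (NMrpow_ne_top hq0' hqt' _)) (ENNReal.pow_ne_top hst)) ?_
    exact ENNReal.inv_ne_top.2 (tsub_pos_of_lt hs1).ne'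
  have hED : ∀ D, μ (E D) ≤ Cbig * s ^ D := by
    intro D
    calc μ (E D) ≤ ∑' d : ℕ, μ (⋃ i, vb (N₀ + D + d) i) := measure_iUnion_le _
      _ ≤ ∑' d : ℕ, ∑' i, μ (vb (N₀ + D + d) i) :=
          ENNReal.tsum_le_tsum fun d => measure_iUnion_le _
      _ ≤ ∑' d : ℕ, c₀ * ((q:ℝ≥0∞) ^ ((2:ℝ) - M)) * s ^ (N₀ + D + d) :=
          ENNReal.tsum_le_tsum fun d => tsum_vb_le Fq q μ hq hμ M ρ (N₀ + D + d)
      _ = Cbig * s ^ D := by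
          simp only [pow_add]
          rw [ENNReal.tsum_mul_left, ENNReal.tsum_mul_left, ENNReal.tsum_geometric, hCbig]
          ring
  have htend : Tendsto (fun D : ℕ => Cbig * s ^ D) atTop (nhds 0) := by
    have h1 : Tendsto (fun D : ℕ => s ^ D) atTop (nhds 0) :=
      ENNReal.tendsto_pow_atTop_nhds_zero_of_lt_one hs1
    have h2 := ENNReal.Tendsto.const_mul (a := Cbig) h1 (Or.inr hCt)
    rwa [mul_zero] at h2
  have hInter : μ (⋂ D, E D) = 0 := by
    have hle : ∀ D : ℕ, μ (⋂ D, E D) ≤ Cbig * s ^ D :=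
      fun D => le_trans (measure_mono (Set.iInter_subset _ D)) (hED D)
    exact le_antisymm (ge_of_tendsto' htend hle) (zero_le)
  refine le_antisymm ?_ (zero_le)
  calc μ _ ≤ μ (NMrat Fq ∪ ⋂ D, E D) := measure_mono hincl
    _ ≤ μ (NMrat Fq) + μ (⋂ D, E D) := measure_union_le _ _
    _ = 0 := by rw [measure_NMrat Fq q μ hq hμ, hInter, add_zero]
end NMaux
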